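/- Let δ_1,...,δ_N be i.i.d. samples from a distribution P on Δ with f : Δ → ℝ measurable, and let h_* = min_{i=1,...,N} f(δ_i). Then for any ε ∈ (0,1), with probability at least 1 - (1-ε)^N over the samples, P{δ : f(δ) < h_*} ≤ ε. -/

import Mathlib

open MeasureTheory

/-- Worst-case scenario guarantee: with probability at least `1-(1-ε)^N` over the
samples, the probability that a fresh sample scores strictly below the sampled
minimum `h_* = min_i f(δ_i)` is at most `ε`. -/
theorem scenario_bound_min
    {Δ : Type*} [MeasurableSpace Δ] (P : Measure Δ) [IsProbabilityMeasure P]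
    (f : Δ → ℝ) (hf : Measurable f) (N : ℕ) (hN : 0 < N)
    (ε : ℝ) (hε : ε ∈ Set.Ioo (0 : ℝ) 1) :
    ENNReal.ofReal (1 - (1 - ε) ^ N) ≤
      (Measure.pi (fun _ : Fin N => P))
        {ω : Fin N → Δ |
          P {δ | f δ < Finset.univ.inf' (Finset.univ_nonempty_iff.mpr ⟨⟨0, hN⟩⟩)
              (fun i => f (ω i))} ≤ ENNReal.ofReal ε} := by
  obtain ⟨hε0, hε1⟩ := hε
  set μ := Measure.pi (fun _ : Fin N => P) with hμ
  set G : ℝ → ENNReal := fun x => P {δ | f δ < x} with hG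
  have Gmono : Monotone G := by
    intro x y hxy
    exact measure_mono (fun δ hδ => lt_of_lt_of_le hδ hxy)
  set E : Set (Fin N → Δ) :=
    {ω : Fin N → Δ |
      P {δ | f δ < Finset.univ.inf' (Finset.univ_nonempty_iff.mpr ⟨⟨0, hN⟩⟩)
          (fun i => f (ω i))} ≤ ENNReal.ofReal ε} with hE
  by_cases hall : ∀ x : ℝ, G x ≤ ENNReal.ofReal ε
  · have : E = Set.univ := by
      ext ω; simp only [hE, Set.mem_setOf_eq, Set.mem_univ, iff_true]
      exact hall _
    rw [this, measure_univ]
    refine ENNReal.ofReal_le_one.mpr ?_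
    have : (0:ℝ) ≤ (1-ε)^N := pow_nonneg (by linarith) N
    linarith
  push_neg at hall
  obtain ⟨x₀, hx₀⟩ := hall
  set S : Set ℝ := {x | G x ≤ ENNReal.ofReal ε} with hS
  -- S is nonempty
  have hne : S.Nonempty := by
    have hempty : ⋂ n : ℕ, {δ | f δ < -(n:ℝ)} = ∅ := by
      ext δ
      simp only [Set.mem_iInter, Set.mem_setOf_eq, Set.mem_empty_iff_false, iff_false, not_forall,
        not_lt]
      obtain ⟨n, hn⟩ := exists_nat_ge (-(f δ))
      exact ⟨n, by linarith⟩
    have hanti : Antitone (fun n : ℕ => {δ | f δ < -(n:ℝ)}) := by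
      intro m n hmn δ hδ
      simp only [Set.mem_setOf_eq] at *
      have : -(n:ℝ) ≤ -(m:ℝ) := by exact_mod_cast neg_le_neg (Nat.cast_le.mpr hmn)
      linarith
    have hinf : (⨅ n : ℕ, P {δ | f δ < -(n:ℝ)}) = 0 := by
      rw [← hanti.measure_iInter (fun n => (hf measurableSet_Iio).nullMeasurableSet)
        ⟨0, measure_ne_top _ _⟩, hempty, measure_empty]
    have hlt : (⨅ n : ℕ, P {δ | f δ < -(n:ℝ)}) < ENNReal.ofReal ε := by
      rw [hinf]; exact ENNReal.ofReal_pos.mpr hε0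
    obtain ⟨n, hn⟩ := exists_lt_of_ciInf_lt hlt
    exact ⟨-(n:ℝ), le_of_lt hn⟩
  have hbdd : BddAbove S := by
    refine ⟨x₀, fun s hs => ?_⟩
    by_contra h
    push_neg at h
    exact absurd (le_trans (Gmono h.le) hs) (not_le.mpr hx₀)
  set t : ℝ := sSup S with ht
  -- everything strictly below t is in S
  have hlt_mem : ∀ x < t, G x ≤ ENNReal.ofReal ε := by
    intro x hx
    obtain ⟨s, hsS, hxs⟩ := exists_lt_of_lt_csSup hne hx
    exact le_trans (Gmono hxs.le) hsS
  -- left continuity: G t ≤ ε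
  have hGt : G t ≤ ENNReal.ofReal ε := by
    have hsub : {δ | f δ < t} = ⋃ n : ℕ, {δ | f δ < t - 1/(n+1)} := by
      ext δ
      simp only [Set.mem_setOf_eq, Set.mem_iUnion]
      constructor
      · intro hδ
        obtain ⟨n, hn⟩ := exists_nat_one_div_lt (sub_pos.mpr hδ)
        exact ⟨n, by linarith⟩
      · rintro ⟨n, hn⟩
        have : (0:ℝ) < 1/(n+1) := by positivity
        linarith
    have hdir : Directed (· ⊆ ·) (fun n : ℕ => {δ | f δ < t - 1/(n+1)}) := by
      have hmon : Monotone (fun n : ℕ => {δ | f δ < t - 1/(n+1)}) := by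
        intro m n hmn δ hδ
        simp only [Set.mem_setOf_eq] at *
        have h1 : (1:ℝ)/(n+1) ≤ 1/(m+1) := by
          apply one_div_le_one_div_of_le (by positivity)
          exact_mod_cast by exact_mod_cast add_le_add_left (Nat.cast_le.mpr hmn) 1
        linarith
      exact hmon.directed_le
    rw [hG]
    simp only []
    rw [hsub, hdir.measure_iUnion]
    exact iSup_le fun n => hlt_mem _ (sub_lt_self t (by positivity))
  -- right limits: P {f ≤ t} ≥ ε
  have hPle : ENNReal.ofReal ε ≤ P {δ | f δ ≤ t} := by
    have hsub : {δ | f δ ≤ t} = ⋂ n : ℕ, {δ | f δ < t + 1/(n+1)} := by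
      ext δ
      simp only [Set.mem_setOf_eq, Set.mem_iInter]
      constructor
      · intro hδ n
        have : (0:ℝ) < 1/(n+1) := by positivity
        linarith
      · intro h
        by_contra hc
        push_neg at hc
        obtain ⟨n, hn⟩ := exists_nat_one_div_lt (sub_pos.mpr hc)
        have := h n
        -- hn : 1/(n+1) < f δ - t
        linarith
    have hanti : Antitone (fun n : ℕ => {δ | f δ < t + 1/(n+1)}) := by
      intro m n hmn δ hδ
      simp only [Set.mem_setOf_eq] at *
      have h1 : (1:ℝ)/(n+1) ≤ 1/(m+1) := by
        apply one_div_le_one_div_of_le (by positivity)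
        exact_mod_cast add_le_add_left (Nat.cast_le.mpr hmn) 1
      linarith
    rw [hsub, hanti.measure_iInter (fun n => (hf measurableSet_Iio).nullMeasurableSet)
      ⟨0, measure_ne_top _ _⟩]
    refine le_iInf fun n => ?_
    have hnotS : t + 1/(n+1) ∉ S := by
      intro hmem
      have := le_csSup hbdd hmem
      have hpos : (0:ℝ) < 1/(n+1) := by positivity
      linarith
    exact le_of_not_ge hnotS
  -- complement bound
  have hcompl : Eᶜ ⊆ Set.univ.pi (fun _ : Fin N => {δ | ¬ f δ ≤ t}) := by
    intro ω hω i _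
    simp only [Set.mem_setOf_eq]
    intro hle
    apply hω
    simp only [hE, Set.mem_setOf_eq]
    have hmin : Finset.univ.inf' (Finset.univ_nonempty_iff.mpr ⟨⟨0, hN⟩⟩)
        (fun i => f (ω i)) ≤ t := le_trans (Finset.inf'_le _ (Finset.mem_univ i)) hle
    exact le_trans (Gmono hmin) hGt
  have hB : P {δ | ¬ f δ ≤ t} ≤ ENNReal.ofReal (1 - ε) := by
    have hm : MeasurableSet {δ | f δ ≤ t} := hf measurableSet_Iic
    have : {δ | ¬ f δ ≤ t} = {δ | f δ ≤ t}ᶜ := rfl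
    rw [this, measure_compl hm (measure_ne_top _ _), measure_univ]
    calc (1 : ENNReal) - P {δ | f δ ≤ t} ≤ 1 - ENNReal.ofReal ε := tsub_le_tsub_left hPle 1
      _ = ENNReal.ofReal (1 - ε) := by
        rw [ENNReal.ofReal_sub 1 hε0.le, ENNReal.ofReal_one]
  have hEc : μ Eᶜ ≤ ENNReal.ofReal ((1 - ε) ^ N) := by
    calc μ Eᶜ ≤ μ (Set.univ.pi (fun _ : Fin N => {δ | ¬ f δ ≤ t})) := measure_mono hcompl
      _ = ∏ i : Fin N, P {δ | ¬ f δ ≤ t} := by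
        rw [hμ, Measure.pi_pi]
      _ = (P {δ | ¬ f δ ≤ t}) ^ N := by
        rw [Finset.prod_const, Finset.card_univ, Fintype.card_fin]
      _ ≤ (ENNReal.ofReal (1 - ε)) ^ N := pow_le_pow_left' hB N
      _ = ENNReal.ofReal ((1 - ε) ^ N) := by
        rw [ENNReal.ofReal_pow (by linarith)]
  have hsum : (1 : ENNReal) ≤ μ E + ENNReal.ofReal ((1 - ε) ^ N) := by
    have h1 : (1 : ENNReal) = μ (E ∪ Eᶜ) := by rw [Set.union_compl_self, measure_univ]
    calc (1 : ENNReal) = μ (E ∪ Eᶜ) := h1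
      _ ≤ μ E + μ Eᶜ := measure_union_le _ _
      _ ≤ μ E + ENNReal.ofReal ((1 - ε) ^ N) := add_le_add_right hEc _
  calc ENNReal.ofReal (1 - (1 - ε) ^ N)
      = 1 - ENNReal.ofReal ((1 - ε) ^ N) := by
        rw [ENNReal.ofReal_sub 1 (pow_nonneg (by linarith) N), ENNReal.ofReal_one]
    _ ≤ μ E := tsub_le_iff_right.mpr hsum
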